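/- A polynomial f in ℂ[x_1,...,x_n] is quasisymmetric if and only if s̃_σ(f) = f for all σ in the symmetric group S_n, where s̃_σ denotes Hivert's quasisymmetric action. -/

import Mathlib

open MvPolynomial

/-- Hivert's quasisymmetric swap on exponent vectors: exchange the exponents in
positions `i` and `i+1` if one of them is zero, otherwise do nothing. -/
noncomputable def tswapE (n i : ℕ) (hi : i + 1 < n) (β : Fin n →₀ ℕ) : Fin n →₀ ℕ :=
  if β ⟨i, by omega⟩ = 0 ∨ β ⟨i + 1, hi⟩ = 0 then
    β.equivMapDomain (Equiv.swap (⟨i, by omega⟩ : Fin n) ⟨i + 1, hi⟩)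
  else β

/-- Hivert's quasisymmetric action `s̃ᵢ` on polynomials, acting monomial-wise by
`s̃ᵢ(x^β) = x^(s̃ᵢ β)` and extended linearly. -/
noncomputable def stilde (n i : ℕ) (hi : i + 1 < n) (f : MvPolynomial (Fin n) ℂ) :
    MvPolynomial (Fin n) ℂ :=
  f.support.sum fun β => monomial (tswapE n i hi β) (coeff β f)

/-- Hivert's swap `s̃ᵢ`, extended to all `i : ℕ` (acting as the identity when
`i` is out of range). -/
noncomputable def stilde' (n i : ℕ) (f : MvPolynomial (Fin n) ℂ) : MvPolynomial (Fin n) ℂ :=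
  if h : i + 1 < n then stilde n i h f else f

/-- `f` is quasisymmetric: for every strong composition `a = (a₁,…,a_k)` of
positive integers and any two strictly increasing index sequences `g, h`, the
coefficient of `x_{g 1}^{a₁} ⋯ x_{g k}^{a_k}` in `f` equals that of
`x_{h 1}^{a₁} ⋯ x_{h k}^{a_k}`. -/
def IsQuasisymmetric (n : ℕ) (f : MvPolynomial (Fin n) ℂ) : Prop :=
  ∀ (k : ℕ) (a : Fin k → ℕ), (∀ t, 0 < a t) →
    ∀ g h : Fin k → Fin n, StrictMono g → StrictMono h →
      coeff (∑ t, Finsupp.single (g t) (a t)) f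
        = coeff (∑ t, Finsupp.single (h t) (a t)) f

lemma tswapE_invol (n i : ℕ) (hi : i + 1 < n) (β : Fin n →₀ ℕ) :
    tswapE n i hi (tswapE n i hi β) = β := by
  simp only [tswapE]
  by_cases h : β ⟨i, by omega⟩ = 0 ∨ β ⟨i + 1, hi⟩ = 0
  · simp only [if_pos h]
    rw [if_pos]
    · ext j
      simp [Finsupp.equivMapDomain_apply, Equiv.symm_swap, Equiv.swap_apply_self]
    · simpa [Finsupp.equivMapDomain_apply, Equiv.symm_swap, Equiv.swap_apply_left,
        Equiv.swap_apply_right] using h.symm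
  · simp only [if_neg h]

lemma coeff_stilde (n i : ℕ) (hi : i + 1 < n) (f : MvPolynomial (Fin n) ℂ) (γ : Fin n →₀ ℕ) :
    coeff γ (stilde n i hi f) = coeff (tswapE n i hi γ) f := by
  unfold stilde
  rw [coeff_sum]
  have key : ∀ β ∈ f.support,
      coeff γ (monomial (tswapE n i hi β) (coeff β f))
        = if β = tswapE n i hi γ then coeff β f else 0 := by
    intro β _
    rw [coeff_monomial]
    congr 1
    apply propext
    constructor
    · intro h; rw [← h, tswapE_invol]
    · intro h; rw [h, tswapE_invol]
  rw [Finset.sum_congr rfl key, Finset.sum_ite_eq']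
  split
  · rfl
  · next h => exact (MvPolynomial.notMem_support_iff.mp h).symm

lemma stilde_eq_self_iff (n i : ℕ) (hi : i + 1 < n) (f : MvPolynomial (Fin n) ℂ) :
    stilde n i hi f = f ↔ ∀ β, coeff (tswapE n i hi β) f = coeff β f := by
  constructor
  · intro hf β
    rw [← coeff_stilde n i hi f β, hf]
  · intro hc
    apply MvPolynomial.ext
    intro γ
    rw [coeff_stilde, hc]

lemma sum_single_apply_inj {n k : ℕ} (g : Fin k → Fin n) (hg : Function.Injective g)
    (a : Fin k → ℕ) (t₀ : Fin k) :
    (∑ t, Finsupp.single (g t) (a t)) (g t₀) = a t₀ := by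
  rw [Finsupp.finset_sum_apply]
  rw [Finset.sum_eq_single t₀]
  · simp
  · intro b _ hb
    rw [Finsupp.single_apply, if_neg (fun hc => hb (hg hc))]
  · simp

lemma sum_single_apply_notin {n k : ℕ} (g : Fin k → Fin n) (a : Fin k → ℕ) (j : Fin n)
    (hj : ∀ t, g t ≠ j) :
    (∑ t, Finsupp.single (g t) (a t)) j = 0 := by
  rw [Finsupp.finset_sum_apply]
  apply Finset.sum_eq_zero
  intro t _
  rw [Finsupp.single_apply, if_neg (hj t)]

lemma equivMapDomain_sum_single {n k : ℕ} (e : Fin n ≃ Fin n) (g : Fin k → Fin n)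
    (a : Fin k → ℕ) :
    Finsupp.equivMapDomain e (∑ t, Finsupp.single (g t) (a t))
      = ∑ t, Finsupp.single (e (g t)) (a t) := by
  have h : Finsupp.equivMapDomain e (∑ t, Finsupp.single (g t) (a t))
      = Finsupp.domCongr (M := ℕ) e (∑ t, Finsupp.single (g t) (a t)) := rfl
  rw [h, map_sum]
  simp [Finsupp.domCongr_apply]

lemma finsupp_decomp {n : ℕ} (β : Fin n →₀ ℕ) :
    ∃ (k : ℕ) (g : Fin k → Fin n) (a : Fin k → ℕ), StrictMono g ∧ (∀ t, 0 < a t) ∧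
      β = ∑ t, Finsupp.single (g t) (a t) := by
  set k := β.support.card with hk
  set iso := β.support.orderIsoOfFin (rfl : β.support.card = k) with hiso
  refine ⟨k, fun t => (iso t : Fin n), fun t => β (iso t : Fin n), ?_, ?_, ?_⟩
  · intro x y hxy
    exact iso.strictMono hxy
  · intro t
    have := (iso t).2
    rw [Finsupp.mem_support_iff] at this
    exact Nat.pos_of_ne_zero this
  · have h1 : ∑ t : Fin k, Finsupp.single ((iso t : Fin n)) (β (iso t : Fin n))
        = ∑ x : β.support, Finsupp.single (x : Fin n) (β x) :=
      Fintype.sum_equiv iso.toEquiv _ _ (fun t => rfl)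
    rw [h1, Finset.sum_coe_sort β.support (fun j => Finsupp.single j (β j))]
    conv_lhs => rw [← Finsupp.sum_single β]
    rfl

lemma le_apply_strictMono {n k : ℕ} {g : Fin k → Fin n} (hg : StrictMono g) :
    ∀ t : Fin k, (t : ℕ) ≤ (g t : ℕ) := by
  have key : ∀ m : ℕ, ∀ t : Fin k, t.val = m → (t : ℕ) ≤ (g t : ℕ) := by
    intro m
    induction m using Nat.strong_induction_on with
    | _ m ih =>
      intro t ht
      have hk := t.isLt
      rcases Nat.eq_zero_or_pos m with h0 | hpos
      · omega
      · have hlt : (⟨m - 1, by omega⟩ : Fin k) < t := by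
          rw [Fin.lt_def]; simp; omega
        have h1 := ih (m - 1) (by omega) ⟨m - 1, by omega⟩ rfl
        have h2 := hg hlt
        rw [Fin.lt_def] at h2
        simp at h1 h2
        omega
  intro t
  exact key t.val t rfl

lemma strictMono_swap {n k : ℕ} {p q : Fin n} (hpq : (q : ℕ) = (p : ℕ) + 1)
    {g : Fin k → Fin n} (hg : StrictMono g)
    (h : (∀ t, g t ≠ p) ∨ (∀ t, g t ≠ q)) :
    StrictMono fun t => Equiv.swap p q (g t) := by
  have sval : ∀ x : Fin n, ((Equiv.swap p q x : Fin n) : ℕ)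
      = if (x : ℕ) = (p : ℕ) then (q : ℕ) else if (x : ℕ) = (q : ℕ) then (p : ℕ) else (x : ℕ) := by
    intro x
    rw [Equiv.swap_apply_def]
    split_ifs <;> simp_all [Fin.ext_iff]
  intro t t' htt'
  have hlt : (g t : ℕ) < (g t' : ℕ) := hg htt'
  simp only [Fin.lt_def]
  rw [sval, sval]
  rcases h with hone | hone <;>
  · have h1 : ((g t : Fin n) : ℕ) ≠ _ := fun hc => hone t (Fin.ext hc)
    have h2 : ((g t' : Fin n) : ℕ) ≠ _ := fun hc => hone t' (Fin.ext hc)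
    split_ifs <;> omega

lemma coeff_eq_packed {n : ℕ} {f : MvPolynomial (Fin n) ℂ}
    (hfix : ∀ (i : ℕ) (hi : i + 1 < n) (β : Fin n →₀ ℕ),
      coeff (tswapE n i hi β) f = coeff β f)
    (k : ℕ) (hkn : k ≤ n) (a : Fin k → ℕ) :
    ∀ (m : ℕ) (g : Fin k → Fin n), StrictMono g → (∑ t, (g t : ℕ)) = m →
      coeff (∑ t, Finsupp.single (g t) (a t)) f
        = coeff (∑ t, Finsupp.single (Fin.castLE hkn t) (a t)) f := by
  intro m
  induction m using Nat.strong_induction_on with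
  | _ m ih =>
    intro g hg hm
    by_cases hall : ∀ t, (g t : ℕ) = (t : ℕ)
    · have hge : ∀ t, g t = Fin.castLE hkn t := fun t => Fin.ext (hall t)
      have : (∑ t, Finsupp.single (g t) (a t))
          = ∑ t, Finsupp.single (Fin.castLE hkn t) (a t) :=
        Finset.sum_congr rfl (fun t _ => by rw [hge t])
      rw [this]
    · push_neg at hall
      -- find minimal bad index
      have hne : (Finset.univ.filter fun t : Fin k => (g t : ℕ) ≠ (t : ℕ)).Nonempty := by
        obtain ⟨t, ht⟩ := hall
        exact ⟨t, by simp [ht]⟩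
      set t₀ := (Finset.univ.filter fun t : Fin k => (g t : ℕ) ≠ (t : ℕ)).min' hne with ht₀
      have hbad : (g t₀ : ℕ) ≠ (t₀ : ℕ) := by
        have := (Finset.univ.filter fun t : Fin k => (g t : ℕ) ≠ (t : ℕ)).min'_mem hne
        simpa using this
      have hmin : ∀ s : Fin k, s < t₀ → (g s : ℕ) = (s : ℕ) := by
        intro s hs
        by_contra hc
        have : t₀ ≤ s := Finset.min'_le _ s (by simp [hc])
        exact absurd hs (not_lt.mpr this)
      have hgt : (t₀ : ℕ) < (g t₀ : ℕ) := lt_of_le_of_ne (le_apply_strictMono hg t₀) (Ne.symm hbad)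
      set i := (g t₀ : ℕ) - 1 with hidef
      have hglt := (g t₀).isLt
      have hi : i + 1 < n := by omega
      set p : Fin n := ⟨i, by omega⟩ with hpdef
      set q : Fin n := ⟨i + 1, hi⟩ with hqdef
      have hq : g t₀ = q := Fin.ext (by simp [hqdef]; omega)
      have hp_not : ∀ t, g t ≠ p := by
        intro t ht
        have hv : (g t : ℕ) = i := by rw [ht]
        have htlt : t < t₀ := by
          have : g t < g t₀ := by rw [Fin.lt_def]; omega
          exact hg.lt_iff_lt.mp this
        have := hmin t htlt
        rw [Fin.lt_def] at htlt
        omega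
      have hβp : (∑ t, Finsupp.single (g t) (a t)) p = 0 :=
        sum_single_apply_notin g a p hp_not
      set g' : Fin k → Fin n := fun t => Equiv.swap p q (g t) with hg'def
      have hg' : StrictMono g' := strictMono_swap (by simp [hpdef, hqdef]) hg (Or.inl hp_not)
      have hts : tswapE n i hi (∑ t, Finsupp.single (g t) (a t))
          = ∑ t, Finsupp.single (g' t) (a t) := by
        simp only [tswapE]
        rw [if_pos (Or.inl hβp)]
        exact equivMapDomain_sum_single _ g a
      have hkey : ∀ t, (g' t : ℕ) + (if t = t₀ then 1 else 0) = (g t : ℕ) := by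
        intro t
        by_cases ht : t = t₀
        · rw [ht, if_pos rfl]
          have hgp : g' t₀ = p := by
            rw [hg'def]; simp only; rw [hq, Equiv.swap_apply_right]
          rw [hgp]
          show i + 1 = (g t₀ : ℕ)
          omega
        · have hne2 : g t ≠ q := fun hc => ht (hg.injective (hc.trans hq.symm))
          have : g' t = g t := by
            rw [hg'def]; simp only
            rw [Equiv.swap_apply_of_ne_of_ne (hp_not t) hne2]
          rw [this]
          simp [ht]
      have hsum : (∑ t, (g' t : ℕ)) + 1 = m := by
        have h1 : (∑ t, ((g' t : ℕ) + if t = t₀ then 1 else 0)) = m := by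
          rw [Finset.sum_congr rfl (fun t _ => hkey t), hm]
        rw [Finset.sum_add_distrib] at h1
        rw [Finset.sum_ite_eq' Finset.univ t₀ (fun _ => 1)] at h1
        simpa using h1
      have hstep := hfix i hi (∑ t, Finsupp.single (g t) (a t))
      rw [hts] at hstep
      rw [← hstep]
      exact ih (∑ t, (g' t : ℕ)) (by omega) g' hg' rfl

lemma qs_invariance {n : ℕ} {f : MvPolynomial (Fin n) ℂ} (hqs : IsQuasisymmetric n f)
    (i : ℕ) (hi : i + 1 < n) (β : Fin n →₀ ℕ) :
    coeff (tswapE n i hi β) f = coeff β f := by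
  simp only [tswapE]
  split_ifs with h
  · obtain ⟨k, g, a, hg, ha, hβ⟩ := finsupp_decomp β
    have hβg : ∀ t, β (g t) ≠ 0 := by
      intro t
      rw [hβ, sum_single_apply_inj g hg.injective]
      exact (ha t).ne'
    have hrange : (∀ t, g t ≠ (⟨i, by omega⟩ : Fin n)) ∨ (∀ t, g t ≠ (⟨i + 1, hi⟩ : Fin n)) := by
      rcases h with h0 | h0
      · exact Or.inl fun t ht => hβg t (ht ▸ h0)
      · exact Or.inr fun t ht => hβg t (ht ▸ h0)
    rw [hβ, equivMapDomain_sum_single]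
    exact hqs k a ha _ g (strictMono_swap rfl hg hrange) hg
  · rfl

/-- A polynomial `f ∈ ℂ[x₁,…,xₙ]` is quasisymmetric if and only if
`s̃_σ f = f` for every `σ ∈ Sₙ`, where Hivert's action of `σ` is obtained by
applying the generators `s̃ᵢ` along any word for `σ`; equivalently, `f` is fixed
by every finite composite of the generators `s̃ᵢ`. -/
theorem isQuasisymmetric_iff_hivert_invariant (n : ℕ) (f : MvPolynomial (Fin n) ℂ) :
    IsQuasisymmetric n f ↔
      ∀ l : List ℕ, (∀ i ∈ l, i + 1 < n) →
        l.foldr (fun i acc => stilde' n i acc) f = f := by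
  constructor
  · intro hqs l hl
    clear hl
    have hfix : ∀ i : ℕ, stilde' n i f = f := by
      intro i
      unfold stilde'
      split
      · next hi => exact (stilde_eq_self_iff n i hi f).mpr (fun β => qs_invariance hqs i hi β)
      · rfl
    induction l with
    | nil => rfl
    | cons i l ihl =>
      simp only [List.foldr_cons]
      rw [ihl]
      exact hfix i
  · intro hfold
    have hco : ∀ (i : ℕ) (hi : i + 1 < n) (β : Fin n →₀ ℕ),
        coeff (tswapE n i hi β) f = coeff β f := by
      intro i hi
      have h1 := hfold [i] (by intro j hj; simp at hj; omega)
      simp only [List.foldr_cons, List.foldr_nil] at h1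
      rw [stilde', dif_pos hi] at h1
      exact (stilde_eq_self_iff n i hi f).mp h1
    intro k a ha g h hg hh
    have hkn : k ≤ n := by
      have := Fintype.card_le_of_injective g hg.injective
      simpa using this
    rw [coeff_eq_packed hco k hkn a _ g hg rfl, coeff_eq_packed hco k hkn a _ h hh rfl]
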